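/- If g is a symplectic automorphism of the complex Hilbert space V, then the antilinear operator Z_g = −A_g C_g^{-1} is symmetric (i.e., <y|Z_g x> = <x|Z_g y> for all x, y) and has operator norm strictly less than 1. -/

import Mathlib

/-- The complex-linear part `C_f = ½(f − JfJ)` of a real-linear map `f`. -/
noncomputable def Cpart {V : Type*} [AddCommGroup V] [Module ℂ V] (f : V → V) : V → V :=
  fun v => (2 : ℂ)⁻¹ • (f v - Complex.I • f (Complex.I • v))

/-- The antilinear part `A_f = ½(f + JfJ)` of a real-linear map `f`. -/
noncomputable def Apart {V : Type*} [AddCommGroup V] [Module ℂ V] (f : V → V) : V → V :=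
  fun v => (2 : ℂ)⁻¹ • (f v + Complex.I • f (Complex.I • v))

open Complex

section helpers
variable {V : Type*} [NormedAddCommGroup V] [InnerProductSpace ℂ V]

lemma h_smul_I (h : V →ₗ[ℝ] V) (v : V) : h (I • I • v) = - h v := by
  rw [smul_smul, I_mul_I, neg_one_smul, map_neg]

lemma Cpart_smul_I (h : V →ₗ[ℝ] V) (v : V) :
    Cpart h (I • v) = I • Cpart h v := by
  simp only [Cpart, h_smul_I]
  match_scalars <;> (ring_nf; try simp [I_sq]; try ring)

lemma Apart_smul_I (h : V →ₗ[ℝ] V) (v : V) :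
    Apart h (I • v) = -(I • Apart h v) := by
  simp only [Apart, h_smul_I]
  match_scalars <;> (ring_nf; try simp [I_sq]; try ring)

lemma Cpart_add_Apart (h : V →ₗ[ℝ] V) (v : V) :
    Cpart h v + Apart h v = h v := by
  simp only [Cpart, Apart]
  module

lemma ident_main (h : V →ₗ[ℝ] V)
    (hs : ∀ x y : V, (inner ℂ (h x) (h y) : ℂ).im = (inner ℂ x y : ℂ).im) (x y : V) :
    (inner ℂ (Cpart h x) (Cpart h y) : ℂ).re - (inner ℂ (Apart h x) (Apart h y) : ℂ).re
      = (inner ℂ x y : ℂ).re ∧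
    (inner ℂ (Cpart h x) (Apart h y) : ℂ) = (inner ℂ (Cpart h y) (Apart h x) : ℂ) := by
  have key : ∀ x y : V,
      ((inner ℂ (Cpart h x) (Cpart h y) : ℂ) + inner ℂ (Cpart h x) (Apart h y)
        + (starRingEnd ℂ) (inner ℂ (Cpart h y) (Apart h x))
        + inner ℂ (Apart h x) (Apart h y)).im = (inner ℂ x y : ℂ).im := by
    intro x y
    have hh := hs x y
    rw [← Cpart_add_Apart h x, ← Cpart_add_Apart h y] at hh
    rw [inner_add_left, inner_add_right, inner_add_right] at hh
    rw [inner_conj_symm, ← hh]; ring_nf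
  have k1 := key x y
  have k2 := key (I • x) y
  have k3 := key x (I • y)
  have k4 := key (I • x) (I • y)
  simp only [Cpart_smul_I, Apart_smul_I, inner_smul_left, inner_smul_right,
    inner_neg_left, inner_neg_right, conj_I, map_mul, map_neg, conj_I,
    RingHom.map_one, map_one] at k2 k3 k4
  simp only [Complex.add_im, Complex.add_re, Complex.mul_im, Complex.mul_re,
    Complex.neg_im, Complex.neg_re, Complex.I_re, Complex.I_im, Complex.conj_re,
    Complex.conj_im] at k1 k2 k3 k4
  constructor
  · linarith
  · apply Complex.ext <;> linarith

lemma ident_adj (h h' : V →ₗ[ℝ] V)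
    (hs : ∀ x y : V, (inner ℂ (h x) y : ℂ).im = (inner ℂ x (h' y) : ℂ).im) (x y : V) :
    (inner ℂ (Cpart h x) y : ℂ).re = (inner ℂ x (Cpart h' y) : ℂ).re := by
  have key : ∀ x y : V,
      ((inner ℂ (Cpart h x) y : ℂ) + inner ℂ (Apart h x) y).im
        = ((inner ℂ x (Cpart h' y) : ℂ) + inner ℂ x (Apart h' y)).im := by
    intro x y
    have hh := hs x y
    rw [← Cpart_add_Apart h x, ← Cpart_add_Apart h' y] at hh
    rw [inner_add_left, inner_add_right] at hh
    exact hh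
  have k2 := key (I • x) y
  have k3 := key x (I • y)
  simp only [Cpart_smul_I, Apart_smul_I, inner_smul_left, inner_smul_right,
    inner_neg_left, inner_neg_right, conj_I] at k2 k3
  simp only [Complex.add_im, Complex.add_re, Complex.mul_im, Complex.mul_re,
    Complex.neg_im, Complex.neg_re, Complex.I_re, Complex.I_im] at k2 k3
  linarith

end helpers

section main
variable {V : Type*} [NormedAddCommGroup V] [InnerProductSpace ℂ V] [CompleteSpace V]
set_option linter.unusedSectionVars false

lemma inner_self_re (x : V) : (inner ℂ x x : ℂ).re = ‖x‖ ^ 2 := by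
  have := inner_self_eq_norm_sq (𝕜 := ℂ) x
  simpa using this

lemma smul_decomp (c : ℂ) (v : V) : c • v = c.re • v + c.im • I • v := by
  conv_lhs => rw [← re_add_im c]
  rw [add_smul, mul_smul]
  norm_num [← Complex.coe_algebraMap, algebraMap_smul]

/-- `Cpart` of a continuous real-linear map, as a `ℂ`-continuous linear map. -/
noncomputable def CpartCLM (g : V →L[ℝ] V) : V →L[ℂ] V :=
  { toFun := Cpart ⇑g
    map_add' := by
      intro x y
      simp only [Cpart, smul_add, map_add]
      module
    map_smul' := by
      intro c v
      have hre : ∀ (r : ℝ) (w : V), Cpart (⇑g) (r • w) = r • Cpart (⇑g) w := by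
        intro r w
        simp only [Cpart, smul_comm (Complex.I) r, map_smul g r]
        module
      have hadd : ∀ (x y : V), Cpart (⇑g) (x + y) = Cpart (⇑g) x + Cpart (⇑g) y := by
        intro x y
        simp only [Cpart, smul_add, map_add]
        module
      have hI : ∀ w, Cpart (⇑g) (I • w) = I • Cpart (⇑g) w := fun w =>
        Cpart_smul_I g.toLinearMap w
      show Cpart (⇑g) (c • v) = c • Cpart (⇑g) v
      rw [smul_decomp c v, hadd, hre c.re, hre c.im, hI,
        smul_decomp c (Cpart (⇑g) v)]
    cont := by
      show Continuous fun v => (2 : ℂ)⁻¹ • (g v - Complex.I • g (Complex.I • v))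
      fun_prop }

lemma CpartCLM_apply (g : V →L[ℝ] V) (v : V) : CpartCLM g v = Cpart ⇑g v := rfl

end main

open ContinuousLinearMap

/-- If `g` is a symplectic automorphism of the complex Hilbert space `V` (a bounded
real-linear bijection preserving `Ω = Im⟨·|·⟩`), then the antilinear operator
`Z_g = −A_g C_g⁻¹` (characterized by `Z_g ∘ C_g = −A_g`, `C_g` being invertible) is
symmetric — `⟨y|Z_g x⟩ = ⟨x|Z_g y⟩` for all `x, y` — and has operator norm strictly less
than `1`. -/
theorem stmt18 {V : Type*} [NormedAddCommGroup V] [InnerProductSpace ℂ V] [CompleteSpace V]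
    (g : V →L[ℝ] V) (hbij : Function.Bijective g)
    (hsymp : ∀ x y : V, (inner ℂ (g x) (g y) : ℂ).im = (inner ℂ x y : ℂ).im)
    (Z : V → V) (hZ : ∀ v : V, Z (Cpart (g : V → V) v) = - Apart (g : V → V) v) :
    (∀ x y : V, (inner ℂ y (Z x) : ℂ) = (inner ℂ x (Z y) : ℂ)) ∧
    ∃ r : ℝ, r < 1 ∧ ∀ v : V, ‖Z v‖ ≤ r * ‖v‖ := by
  classical
  let f : V ≃ₗ[ℝ] V := LinearEquiv.ofBijective g.toLinearMap hbij
  let finv : V →ₗ[ℝ] V := f.symm.toLinearMap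
  have hgf : ∀ x, g (finv x) = x := fun x => f.apply_symm_apply x
  have hmain : ∀ x y : V,
      (inner ℂ (Cpart ⇑g x) (Cpart ⇑g y) : ℂ).re - (inner ℂ (Apart ⇑g x) (Apart ⇑g y) : ℂ).re
        = (inner ℂ x y : ℂ).re ∧
      (inner ℂ (Cpart ⇑g x) (Apart ⇑g y) : ℂ) = (inner ℂ (Cpart ⇑g y) (Apart ⇑g x) : ℂ) :=
    fun x y => ident_main g.toLinearMap hsymp x y
  have hnormg : ∀ v : V, ‖Cpart ⇑g v‖ ^ 2 = ‖v‖ ^ 2 + ‖Apart ⇑g v‖ ^ 2 := by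
    intro v
    have h1 := (hmain v v).1
    rw [inner_self_re, inner_self_re, inner_self_re] at h1
    linarith
  have hsf : ∀ x y : V, (inner ℂ (finv x) (finv y) : ℂ).im = (inner ℂ x y : ℂ).im := by
    intro x y
    have h := hsymp (finv x) (finv y)
    rw [hgf, hgf] at h
    linarith
  have hnormf : ∀ v : V, ‖v‖ ^ 2 ≤ ‖Cpart ⇑finv v‖ ^ 2 := by
    intro v
    have h1 := (ident_main finv hsf v v).1
    rw [inner_self_re, inner_self_re, inner_self_re] at h1
    nlinarith [sq_nonneg ‖Apart ⇑finv v‖]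
  have hadj : ∀ x y : V, (inner ℂ (g x) y : ℂ).im = (inner ℂ x (finv y) : ℂ).im := by
    intro x y
    have h := hsymp x (finv y)
    rwa [hgf] at h
  have hadjre : ∀ x y : V,
      (inner ℂ (Cpart ⇑g x) y : ℂ).re = (inner ℂ x (Cpart ⇑finv y) : ℂ).re :=
    fun x y => ident_adj g.toLinearMap finv hadj x y
  set C := CpartCLM g with hCdef
  have hCapp : ∀ v, C v = Cpart ⇑g v := fun v => rfl
  have hadjoint : ∀ y, adjoint C y = Cpart ⇑finv y := by
    intro y
    have hz : ∀ x : V, (inner ℂ x (adjoint C y - Cpart ⇑finv y) : ℂ).re = 0 := by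
      intro x
      have h1 : (inner ℂ x (adjoint C y) : ℂ) = inner ℂ (C x) y :=
        ContinuousLinearMap.adjoint_inner_right C x y
      rw [inner_sub_right, Complex.sub_re, h1, hCapp, hadjre, sub_self]
    have hw := hz (adjoint C y - Cpart ⇑finv y)
    rw [inner_self_re] at hw
    have h0 : adjoint C y - Cpart ⇑finv y = 0 := by
      have := norm_nonneg (adjoint C y - Cpart ⇑finv y)
      exact norm_le_zero_iff.mp (by nlinarith)
    exact sub_eq_zero.mp h0
  have hCle : ∀ v : V, ‖v‖ ≤ ‖C v‖ := by
    intro v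
    rw [hCapp]
    nlinarith [hnormg v, norm_nonneg (Apart ⇑g v), norm_nonneg v,
      norm_nonneg (Cpart ⇑g v), sq_nonneg ‖Apart ⇑g v‖]
  have hanti : AntilipschitzWith 1 C := C.antilipschitz_of_bound (by simpa using hCle)
  have hclosed : IsClosed (Set.range ⇑C) := hanti.isClosed_range C.uniformContinuous
  have hsurj : ∀ w : V, ∃ v, Cpart ⇑g v = w := by
    have hc : IsClosed ((LinearMap.range (C : V →ₗ[ℂ] V) : Submodule ℂ V) : Set V) := by
      rw [LinearMap.coe_range]; exact hclosed
    have hcs : CompleteSpace (LinearMap.range (C : V →ₗ[ℂ] V)) := hc.completeSpace_coe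
    have hrange : LinearMap.range (C : V →ₗ[ℂ] V) = ⊤ := by
      rw [← Submodule.orthogonal_eq_bot_iff, Submodule.eq_bot_iff]
      intro w hw
      have h0 : ∀ v : V, (inner ℂ (C v) w : ℂ) = 0 := fun v =>
        (Submodule.mem_orthogonal _ w).mp hw (C v) ⟨v, rfl⟩
      have h1 : adjoint C w = 0 := by
        have h2 : (inner ℂ (adjoint C w) (adjoint C w) : ℂ) = 0 := by
          rw [ContinuousLinearMap.adjoint_inner_right]; exact h0 _
        rwa [inner_self_eq_zero] at h2
      have h2 : ‖w‖ ^ 2 ≤ ‖adjoint C w‖ ^ 2 := by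
        rw [hadjoint]; exact hnormf w
      rw [h1] at h2
      simp only [norm_zero] at h2
      exact norm_le_zero_iff.mp (by nlinarith [norm_nonneg w])
    intro w
    obtain ⟨v, hv⟩ := hrange ▸ Submodule.mem_top (x := w)
    exact ⟨v, hv⟩
  constructor
  · intro x y
    obtain ⟨u, hu⟩ := hsurj x
    obtain ⟨v, hv⟩ := hsurj y
    subst hu; subst hv
    rw [hZ u, hZ v, inner_neg_right, inner_neg_right, (hmain v u).2]
  · set M := max ‖C‖ 1 with hMdef
    have hM1 : (1 : ℝ) ≤ M := le_max_right _ _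
    have hM0 : (0 : ℝ) < M := lt_of_lt_of_le one_pos hM1
    have hs0 : 0 ≤ 1 - 1 / M ^ 2 := by
      have h : 1 / M ^ 2 ≤ 1 := by
        rw [div_le_one (by positivity)]; nlinarith
      linarith
    have hr2 : Real.sqrt (1 - 1 / M ^ 2) ^ 2 = 1 - 1 / M ^ 2 := Real.sq_sqrt hs0
    have hMinv : 1 / M ^ 2 * M ^ 2 = 1 := by field_simp
    refine ⟨Real.sqrt (1 - 1 / M ^ 2), ?_, ?_⟩
    · nlinarith [Real.sqrt_nonneg (1 - 1 / M ^ 2), one_div_pos.mpr (pow_pos hM0 2)]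
    · intro w
      obtain ⟨v, hv⟩ := hsurj w
      subst hv
      rw [hZ v, norm_neg]
      have hb : ‖Cpart ⇑g v‖ ≤ M * ‖v‖ := by
        have h := C.le_opNorm v
        rw [hCapp] at h
        nlinarith [norm_nonneg v, le_max_left ‖C‖ 1]
      have h1 := hnormg v
      have hc2 : ‖Cpart ⇑g v‖ ^ 2 ≤ M ^ 2 * ‖v‖ ^ 2 := by
        nlinarith [norm_nonneg v, norm_nonneg (Cpart ⇑g v)]
      have hn2 : 1 / M ^ 2 * ‖Cpart ⇑g v‖ ^ 2 ≤ ‖v‖ ^ 2 := by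
        have h3 := mul_le_mul_of_nonneg_left hc2
          (le_of_lt (one_div_pos.mpr (pow_pos hM0 2)))
        nlinarith [hMinv]
      have ha2 : ‖Apart ⇑g v‖ ^ 2 ≤ (1 - 1 / M ^ 2) * ‖Cpart ⇑g v‖ ^ 2 := by
        nlinarith
      calc ‖Apart ⇑g v‖ = Real.sqrt (‖Apart ⇑g v‖ ^ 2) :=
            (Real.sqrt_sq (norm_nonneg _)).symm
        _ ≤ Real.sqrt ((1 - 1 / M ^ 2) * ‖Cpart ⇑g v‖ ^ 2) := Real.sqrt_le_sqrt ha2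
        _ = Real.sqrt (1 - 1 / M ^ 2) * ‖Cpart ⇑g v‖ := by
            rw [Real.sqrt_mul hs0, Real.sqrt_sq (norm_nonneg _)]
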